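/- For even k ≥ 4, the sum of all odd-indexed double zeta values of weight k satisfies Σ_{j odd, 3 ≤ j ≤ k-1} ζ(j, k-j) = (1/4)·ζ(k). -/

import Mathlib

/-- Riemann zeta value ζ(j) = ∑_{m≥1} 1/m^j. -/
noncomputable def rz (j : ℕ) : ℝ := ∑' n : ℕ, 1 / ((n : ℝ) + 1) ^ j

/-- Double zeta value ζ(q,p) = ∑_{n>m>0} 1/(n^q m^p). -/
noncomputable def dz (q p : ℕ) : ℝ :=
  ∑' x : ℕ × ℕ, 1 / (((x.1 : ℝ) + (x.2 : ℝ) + 2) ^ q * ((x.2 : ℝ) + 1) ^ p)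

/-- Tornheim double series T(r,q,p) = ∑_{n,m>0} 1/((n+m)^r n^q m^p). -/
noncomputable def T (r q p : ℕ) : ℝ :=
  ∑' x : ℕ × ℕ,
    1 / (((x.1 : ℝ) + (x.2 : ℝ) + 2) ^ r * ((x.1 : ℝ) + 1) ^ q * ((x.2 : ℝ) + 1) ^ p)

open Finset Filter Topology

noncomputable def harm (n : ℕ) : ℝ := ∑ i ∈ Finset.range n, 1/((i:ℝ)+1)

lemma harm_succ (n : ℕ) : harm (n+1) = harm n + 1/((n:ℝ)+1) := Finset.sum_range_succ _ n

lemma harm_nonneg (n : ℕ) : 0 ≤ harm n := Finset.sum_nonneg (by intro i _; positivity)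

lemma harm_le (n : ℕ) : harm n ≤ n := by
  induction n with
  | zero => simp [harm]
  | succ n ih =>
    rw [harm_succ]
    push_cast
    have : 1/((n:ℝ)+1) ≤ 1 := by
      rw [div_le_one (by positivity)]; linarith
    linarith

lemma summable_inv_sq : Summable (fun n : ℕ => 1/((n:ℝ)+1)^2) := by
  have := Real.summable_one_div_nat_pow.2 (le_refl 2)
  have h := (summable_nat_add_iff 1).2 this
  simpa using h

lemma tendsto_inv_nat : Tendsto (fun N : ℕ => 1/((N:ℝ)+1)) atTop (𝓝 0) := by
  have h : Tendsto (fun N : ℕ => (N:ℝ)+1) atTop atTop :=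
    tendsto_atTop_add_const_right _ 1 tendsto_natCast_atTop_atTop
  simpa [one_div, Pi.inv_def] using h.inv_tendsto_atTop

/-- The tail sums Σ_{r=N}^{N+c-1} 1/(r+1) tend to 0. -/
lemma tendsto_ico_block (c : ℕ) :
    Tendsto (fun N : ℕ => ∑ r ∈ Finset.Ico N (N+c), 1/((r:ℝ)+1)) atTop (𝓝 0) := by
  apply squeeze_zero (fun N => Finset.sum_nonneg (fun r _ => by positivity))
    (g := fun N : ℕ => (c:ℝ) * (1/((N:ℝ)+1)))
  · intro N
    calc ∑ r ∈ Finset.Ico N (N+c), 1/((r:ℝ)+1)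
        ≤ ∑ _r ∈ Finset.Ico N (N+c), 1/((N:ℝ)+1) := by
          apply Finset.sum_le_sum
          intro r hr
          rw [Finset.mem_Ico] at hr
          apply one_div_le_one_div_of_le (by positivity)
          have : (N:ℝ) ≤ r := Nat.cast_le.2 hr.1
          linarith
      _ = (c:ℝ) * (1/((N:ℝ)+1)) := by
          rw [Finset.sum_const, Nat.card_Ico, nsmul_eq_mul]
          rw [Nat.add_sub_cancel_left]
  · simpa using (tendsto_const_nhds (x := (c:ℝ))).mul tendsto_inv_nat

/-- telescoping: ∑_{a≥0} 1/((a+1)(a+b+2)) = H_{b+1}/(b+1). -/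
lemma hasSum_T1 (b : ℕ) :
    HasSum (fun a : ℕ => 1/(((a:ℝ)+1)*((a:ℝ)+(b:ℝ)+2))) (harm (b+1) / ((b:ℝ)+1)) := by
  set f : ℕ → ℝ := fun a => 1/(((a:ℝ)+1)*((a:ℝ)+(b:ℝ)+2)) with hf
  have hsum : Summable f := by
    apply Summable.of_nonneg_of_le (fun a => by positivity) _ summable_inv_sq
    intro a
    rw [hf]
    apply one_div_le_one_div_of_le (by positivity)
    have h1 : (0:ℝ) ≤ b := Nat.cast_nonneg b
    have h2 : (0:ℝ) ≤ a := Nat.cast_nonneg a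
    nlinarith
  have key : ∀ N : ℕ, ∑ a ∈ range N, f a
      = (harm (b+1) - ∑ r ∈ Finset.Ico N (N+(b+1)), 1/((r:ℝ)+1)) / ((b:ℝ)+1) := by
    intro N
    induction N with
    | zero =>
      rw [Finset.sum_range_zero, show (0:ℕ)+(b+1) = b+1 by omega, ← Finset.range_eq_Ico]
      rw [show harm (b+1) = ∑ r ∈ Finset.range (b+1), 1/((r:ℝ)+1) from rfl]
      simp
    | succ N ih =>
      rw [Finset.sum_range_succ, ih]
      set g : ℕ → ℝ := fun r => 1/((r:ℝ)+1) with hg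
      have e1 : ∑ r ∈ Finset.Ico N (N+(b+1)+1), g r
          = ∑ r ∈ Finset.Ico N (N+(b+1)), g r + g (N+(b+1)) :=
        Finset.sum_Ico_succ_top (by omega) g
      have e2 : ∑ r ∈ Finset.Ico N (N+(b+1)+1), g r
          = g N + ∑ r ∈ Finset.Ico (N+1) (N+(b+1)+1), g r :=
        Finset.sum_eq_sum_Ico_succ_bot (by omega) g
      have e3 : N+1+(b+1) = N+(b+1)+1 := by omega
      rw [e3]
      have e4 : ∑ r ∈ Finset.Ico (N+1) (N+(b+1)+1), g r
          = ∑ r ∈ Finset.Ico N (N+(b+1)), g r + g (N+(b+1)) - g N := by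
        rw [← e1, e2]; ring
      rw [e4, hf, hg]
      have hb : (0:ℝ) < (b:ℝ)+1 := by positivity
      have hN1 : (0:ℝ) < (N:ℝ)+1 := by positivity
      have hN2 : (0:ℝ) < (N:ℝ)+(b:ℝ)+2 := by positivity
      push_cast
      field_simp
      ring
  have hlim : Tendsto (fun N => ∑ a ∈ range N, f a) atTop (𝓝 (harm (b+1) / ((b:ℝ)+1))) := by
    have h0 := tendsto_ico_block (b+1)
    have : Tendsto (fun N : ℕ => (harm (b+1) - ∑ r ∈ Finset.Ico N (N+(b+1)), 1/((r:ℝ)+1)) / ((b:ℝ)+1))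
        atTop (𝓝 ((harm (b+1) - 0)/((b:ℝ)+1))) :=
      ((tendsto_const_nhds).sub h0).div_const _
    rw [sub_zero] at this
    exact this.congr (fun N => (key N).symm)
  have h2 := hsum.hasSum.tendsto_sum_nat
  have hfinal : ∑' a, f a = harm (b+1) / ((b:ℝ)+1) := tendsto_nhds_unique h2 hlim
  exact hfinal ▸ hsum.hasSum

/-- summand for the key lemma -/
noncomputable def sfun (b : ℕ) : ℕ → ℝ :=
  fun a => if a = b then 0 else 1/((((a:ℝ)+1)^2 - ((b:ℝ)+1)^2))

lemma summable_sfun (b : ℕ) : Summable (sfun b) := by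
  rw [← summable_nat_add_iff (2*b+2)]
  apply Summable.of_nonneg_of_le _ _ summable_inv_sq
  · intro a
    have h : ¬ (a + (2*b+2) = b) := by omega
    simp only [sfun, h, if_false]
    have hb : (0:ℝ) ≤ b := Nat.cast_nonneg b
    have ha : (0:ℝ) ≤ a := Nat.cast_nonneg a
    have hc : ((a + (2*b+2) : ℕ):ℝ) = (a:ℝ)+2*(b:ℝ)+2 := by push_cast; ring
    rw [hc]
    have hx : (0:ℝ) < ((a:ℝ)+2*(b:ℝ)+2+1)^2 - ((b:ℝ)+1)^2 := by nlinarith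
    exact le_of_lt (one_div_pos.2 hx)
  · intro a
    have h : ¬ (a + (2*b+2) = b) := by omega
    simp only [sfun, h, if_false]
    have hb : (0:ℝ) ≤ b := Nat.cast_nonneg b
    have ha : (0:ℝ) ≤ a := Nat.cast_nonneg a
    have hc : ((a + (2*b+2) : ℕ):ℝ) = (a:ℝ)+2*(b:ℝ)+2 := by push_cast; ring
    rw [hc]
    apply one_div_le_one_div_of_le (by positivity)
    nlinarith

/-- Key telescoping lemma: ∑_{n≥1, n≠m} 1/(n²-m²) = 3/(4m²), with n=a+1, m=b+1. -/
lemma hasSum_S (b : ℕ) : HasSum (sfun b) (3/(4*((b:ℝ)+1)^2)) := by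
  have hsum := summable_sfun b
  set m : ℕ := b+1 with hm
  have hmR : ((b:ℝ)+1) = (m:ℕ) := by push_cast [hm]; ring
  -- partial-sum formula for N ≥ m
  have key : ∀ N : ℕ, m ≤ N → ∑ a ∈ range N, sfun b a
      = 3/(4*((b:ℝ)+1)^2)
        - (1/(2*((b:ℝ)+1))) * ∑ r ∈ Finset.Ico (N-m) (N+m), 1/((r:ℝ)+1) := by
    intro N hN
    induction N, hN using Nat.le_induction with
    | base =>
      -- N = m
      have e0 : m - m = 0 := by omega
      rw [e0, ← Finset.range_eq_Ico]
      -- LHS: last term is zero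
      have e1 : ∑ a ∈ range (b+1), sfun b a = ∑ a ∈ range b, sfun b a := by
        rw [Finset.sum_range_succ]
        simp [sfun]
      rw [show (m:ℕ) = b+1 from rfl, e1]
      -- rewrite each term a < b via partial fractions
      have e2 : ∑ a ∈ range b, sfun b a
          = (1/(2*((b:ℝ)+1))) * ∑ a ∈ range b, (1/(((a:ℝ)+1) - ((b:ℝ)+1)) - 1/(((a:ℝ)+1)+((b:ℝ)+1))) := by
        rw [Finset.mul_sum]
        apply Finset.sum_congr rfl
        intro a ha
        rw [Finset.mem_range] at ha
        have hne : ¬ (a = b) := by omega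
        simp only [sfun, hne, if_false]
        have hab : (a:ℝ) < b := by exact_mod_cast ha
        have h1 : (a:ℝ) - (b:ℝ) ≠ 0 := by intro h; nlinarith
        have h2 : ((a:ℝ)+1) + ((b:ℝ)+1) > 0 := by positivity
        have h3 : ((a:ℝ)+1)^2 - ((b:ℝ)+1)^2 ≠ 0 := by
          intro h; nlinarith
        have hb1 : ((b:ℝ)+1) ≠ 0 := by positivity
        rw [div_sub_div _ _ (by intro h; apply h1; nlinarith : ((a:ℝ)+1) - ((b:ℝ)+1) ≠ 0) (ne_of_gt h2)]
        rw [div_mul_div_comm]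
        rw [div_eq_div_iff h3 (by intro h; rw [mul_eq_zero] at h; rcases h with h|h
                                  · nlinarith
                                  · apply (mul_ne_zero (by intro hh; apply h1; nlinarith : ((a:ℝ)+1) - ((b:ℝ)+1) ≠ 0) (ne_of_gt h2)); exact h)]
        ring
      -- part A: reflection
      have eA : ∑ a ∈ range b, 1/(((a:ℝ)+1) - ((b:ℝ)+1)) = - ∑ a ∈ range b, 1/((a:ℝ)+1) := by
        rw [← Finset.sum_range_reflect (fun a => 1/(((a:ℝ)+1) - ((b:ℝ)+1))) b]
        rw [← Finset.sum_neg_distrib]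
        apply Finset.sum_congr rfl
        intro j hj
        rw [Finset.mem_range] at hj
        have hcast : ((b - 1 - j : ℕ) : ℝ) = (b:ℝ) - 1 - (j:ℝ) := by
          have h1 : j ≤ b - 1 := by omega
          have h2 : 1 ≤ b := by omega
          push_cast [Nat.cast_sub h1, Nat.cast_sub h2]
          ring
        rw [hcast]
        have hj1 : (j:ℝ)+1 > 0 := by positivity
        have hj0 : ((b:ℝ) - 1 - (j:ℝ) + 1 - ((b:ℝ)+1)) = -((j:ℝ)+1) := by ring
        rw [hj0]
        rw [one_div, one_div, inv_neg]
      -- part B: shift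
      have eB : ∑ a ∈ range b, 1/(((a:ℝ)+1)+((b:ℝ)+1)) = ∑ r ∈ Finset.Ico (b+1) (2*b+1), 1/((r:ℝ)+1) := by
        rw [Finset.sum_Ico_eq_sum_range]
        have : 2*b+1 - (b+1) = b := by omega
        rw [this]
        apply Finset.sum_congr rfl
        intro a _
        push_cast
        ring_nf
      -- decompose harm-like sum on RHS
      have eH : ∑ r ∈ Finset.range (b+1+(b+1)), 1/((r:ℝ)+1)
          = ∑ a ∈ range b, 1/((a:ℝ)+1) + 1/((b:ℝ)+1)
            + ∑ r ∈ Finset.Ico (b+1) (2*b+1), 1/((r:ℝ)+1) + 1/(2*((b:ℝ)+1)) := by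
        have h1 : b+1+(b+1) = (2*b+1)+1 := by omega
        rw [h1, Finset.sum_range_succ]
        rw [Finset.range_eq_Ico, ← Finset.sum_Ico_consecutive (fun r => 1/((r:ℝ)+1)) (Nat.zero_le (b+1)) (by omega : b+1 ≤ 2*b+1)]
        rw [← Finset.range_eq_Ico, Finset.sum_range_succ]
        push_cast
        ring
      rw [e2, Finset.sum_sub_distrib, eA, eB, eH]
      have hb : (0:ℝ) < (b:ℝ)+1 := by positivity
      generalize ∑ a ∈ range b, 1/((a:ℝ)+1) = HA
      generalize ∑ r ∈ Finset.Ico (b+1) (2*b+1), 1/((r:ℝ)+1) = RB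
      field_simp
      ring
    | succ N hN ih =>
      rw [Finset.sum_range_succ, ih]
      have hNb : ¬ (N = b) := by omega
      simp only [sfun, hNb, if_false]
      set g : ℕ → ℝ := fun r => 1/((r:ℝ)+1) with hg
      have e3 : N+1-m = (N-m)+1 := by omega
      have e1 : ∑ r ∈ Finset.Ico (N-m) (N+m+1), g r
          = ∑ r ∈ Finset.Ico (N-m) (N+m), g r + g (N+m) :=
        Finset.sum_Ico_succ_top (by omega) g
      have e2 : ∑ r ∈ Finset.Ico (N-m) (N+m+1), g r
          = g (N-m) + ∑ r ∈ Finset.Ico ((N-m)+1) (N+m+1), g r :=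
        Finset.sum_eq_sum_Ico_succ_bot (by omega) g
      have e4 : ∑ r ∈ Finset.Ico (N+1-m) (N+1+m), g r
          = ∑ r ∈ Finset.Ico (N-m) (N+m), g r + g (N+m) - g (N-m) := by
        rw [show N+1+m = N+m+1 by omega, e3, ← e1, e2]; ring
      rw [e4]
      have hcast : ((N - m : ℕ) : ℝ) = (N:ℝ) - ((b:ℝ)+1) := by
        rw [Nat.cast_sub (by omega)]; push_cast [hm]; ring
      rw [hg]
      simp only []
      rw [hcast]
      push_cast
      have hb : (0:ℝ) < (b:ℝ)+1 := by positivity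
      have hNm : ((b:ℝ)+1) < (N:ℝ) + 1 := by
        have : (m:ℝ) ≤ N := Nat.cast_le.2 hN
        rw [← hmR] at this; linarith
      have h1 : (N:ℝ) - ((b:ℝ)+1) + 1 > 0 := by linarith
      have h2 : (N:ℝ) + ((b:ℝ)+1) + 1 > 0 := by positivity
      have h3 : ((N:ℝ)+1)^2 - ((b:ℝ)+1)^2 > 0 := by nlinarith
      field_simp
      rw [← hmR]; ring
  -- limit
  have hlim : Tendsto (fun N => ∑ a ∈ range N, sfun b a) atTop (𝓝 (3/(4*((b:ℝ)+1)^2))) := by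
    have h0 := tendsto_ico_block (2*m)
    have h0' : Tendsto (fun N : ℕ => ∑ r ∈ Finset.Ico (N-m) (N+m), 1/((r:ℝ)+1)) atTop (𝓝 0) := by
      have hcomp : Tendsto (fun N : ℕ => N - m) atTop atTop := by
        apply tendsto_atTop_atTop.2
        intro M
        exact ⟨M + m, fun n hn => by omega⟩
      have := h0.comp hcomp
      apply this.congr'
      filter_upwards [eventually_ge_atTop m] with N hN
      have : N - m + 2*m = N + m := by omega
      simp only [Function.comp_apply, this]
    have : Tendsto (fun N : ℕ => 3/(4*((b:ℝ)+1)^2)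
        - (1/(2*((b:ℝ)+1))) * ∑ r ∈ Finset.Ico (N-m) (N+m), 1/((r:ℝ)+1)) atTop
        (𝓝 (3/(4*((b:ℝ)+1)^2) - (1/(2*((b:ℝ)+1))) * 0)) :=
      tendsto_const_nhds.sub (tendsto_const_nhds.mul h0')
    rw [mul_zero, sub_zero] at this
    apply this.congr'
    filter_upwards [eventually_ge_atTop m] with N hN
    exact (key N hN).symm
  have h2 := hsum.hasSum.tendsto_sum_nat
  have hfinal : ∑' a, sfun b a = 3/(4*((b:ℝ)+1)^2) := tendsto_nhds_unique h2 hlim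
  exact hfinal ▸ hsum.hasSum

lemma tsum_abs_sfun_le (b : ℕ) : ∑' a, |sfun b a| ≤ 2 := by
  have habs : Summable (fun a => |sfun b a|) := summable_abs_iff.2 (summable_sfun b)
  rw [← Summable.sum_add_tsum_nat_add (b+1) habs]
  have h1 : ∑ a ∈ range (b+1), |sfun b a| ≤ 1 := by
    calc ∑ a ∈ range (b+1), |sfun b a| ≤ ∑ _a ∈ range (b+1), 1/((b:ℝ)+2) := by
          apply Finset.sum_le_sum
          intro a ha
          rw [Finset.mem_range] at ha
          by_cases h : a = b
          · simp [sfun, h]; positivity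
          · have hab : a < b := by omega
            have habR : (a:ℝ) < b := by exact_mod_cast hab
            simp only [sfun, h, if_false]
            have hD : ((a:ℝ)+1)^2 - ((b:ℝ)+1)^2 < 0 := by nlinarith
            rw [abs_one_div, abs_of_neg hD]
            apply one_div_le_one_div_of_le (by positivity)
            have h1 : (1:ℝ) ≤ (b:ℝ) - (a:ℝ) := by
              have : (a:ℝ)+1 ≤ b := by exact_mod_cast hab
              linarith
            nlinarith [Nat.cast_nonneg (α := ℝ) a]
      _ = ((b:ℝ)+1) * (1/((b:ℝ)+2)) := by
            rw [Finset.sum_const, nsmul_eq_mul, Finset.card_range]; push_cast; ring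
      _ ≤ 1 := by rw [← le_div_iff₀ (by positivity : (0:ℝ) < 1/((b:ℝ)+2))]; rw [div_div_eq_mul_div]; 
                  rw [one_mul, le_div_iff₀ one_pos]; ring_nf; linarith
  have h2 : ∑' a, |sfun b (a + (b+1))| ≤ 1 := by
    have hT0 : HasSum (fun a : ℕ => 1/(((a:ℝ)+1)*((a:ℝ)+2))) 1 := by
      have hT := hasSum_T1 0
      have e1 : harm (0+1) / (((0:ℕ):ℝ)+1) = 1 := by norm_num [harm]
      have hfun : (fun a : ℕ => 1/(((a:ℝ)+1)*((a:ℝ)+((0:ℕ):ℝ)+2)))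
          = (fun a : ℕ => 1/(((a:ℝ)+1)*((a:ℝ)+2))) := by
        funext a; norm_num
      rw [hfun, e1] at hT
      exact hT
    refine le_trans (Summable.tsum_le_tsum ?_ ((summable_nat_add_iff (f := fun a => |sfun b a|) (b+1)).2 habs) hT0.summable)
      (le_of_eq hT0.tsum_eq)
    intro a
    have h : ¬ (a + (b+1) = b) := by omega
    simp only [sfun, h, if_false]
    have hc : ((a + (b+1) : ℕ):ℝ) = (a:ℝ)+(b:ℝ)+1 := by push_cast; ring
    rw [hc]
    have hb : (0:ℝ) ≤ b := Nat.cast_nonneg b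
    have ha : (0:ℝ) ≤ a := Nat.cast_nonneg a
    have hD : ((a:ℝ)+(b:ℝ)+1+1)^2 - ((b:ℝ)+1)^2 = ((a:ℝ)+1)*((a:ℝ)+2*(b:ℝ)+3) := by ring
    rw [hD, abs_one_div, abs_of_pos (by positivity)]
    apply one_div_le_one_div_of_le (by positivity)
    nlinarith
  linarith

/-- first double family: 1/(m^c (n²-m²)), n=p.1+1, m=p.2+1, zero on diagonal -/
noncomputable def g1 (c : ℕ) : ℕ×ℕ → ℝ :=
  fun p => if p.1 = p.2 then 0 else
    1/(((p.2:ℝ)+1)^c * (((p.1:ℝ)+1)^2 - ((p.2:ℝ)+1)^2))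

/-- second double family: 1/(n^c (n²-m²)) -/
noncomputable def g2 (c : ℕ) : ℕ×ℕ → ℝ :=
  fun p => if p.1 = p.2 then 0 else
    1/(((p.1:ℝ)+1)^c * (((p.1:ℝ)+1)^2 - ((p.2:ℝ)+1)^2))

lemma g1_eq (c a b : ℕ) : g1 c (a, b) = (1/((b:ℝ)+1)^c) * sfun b a := by
  simp only [g1, sfun]
  by_cases h : a = b
  · simp [h]
  · simp only [h, if_false]
    rw [← one_div_mul_one_div]

lemma g2_eq_neg (c : ℕ) (p : ℕ×ℕ) : g2 c p = - g1 c (p.2, p.1) := by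
  obtain ⟨a, b⟩ := p
  simp only [g1, g2]
  by_cases h : a = b
  · simp [h]
  · have h' : ¬ (b = a) := fun hh => h hh.symm
    simp only [h, h', if_false]
    have : ((b:ℝ)+1)^2 - ((a:ℝ)+1)^2 = -((((a:ℝ)+1)^2 - ((b:ℝ)+1)^2)) := by ring
    rw [this, mul_neg, div_neg, neg_neg]

lemma summable_abs_g1_swap (c : ℕ) (hc : 2 ≤ c) :
    Summable (fun q : ℕ×ℕ => |g1 c (q.2, q.1)|) := by
  rw [summable_prod_of_nonneg (fun q => abs_nonneg _)]
  constructor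
  · intro x
    apply Summable.congr ((summable_abs_iff.2 (summable_sfun x)).mul_left (1/((x:ℝ)+1)^c))
    intro y
    rw [g1_eq, abs_mul, abs_of_nonneg (by positivity : (0:ℝ) ≤ 1/((x:ℝ)+1)^c)]
  · apply Summable.of_nonneg_of_le (fun x : ℕ => tsum_nonneg (fun y => abs_nonneg _)) _
      (summable_inv_sq.mul_left 2)
    intro x
    show ∑' y, |g1 c (y, x)| ≤ 2 * (1/((x:ℝ)+1)^2)
    have he : ∀ y:ℕ, |g1 c (y, x)| = (1/((x:ℝ)+1)^c) * |sfun x y| := by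
      intro y
      rw [g1_eq, abs_mul, abs_of_nonneg (by positivity : (0:ℝ) ≤ 1/((x:ℝ)+1)^c)]
    calc ∑' y, |g1 c (y, x)| = (1/((x:ℝ)+1)^c) * ∑' y, |sfun x y| := by
          rw [← tsum_mul_left]; exact tsum_congr he
      _ ≤ (1/((x:ℝ)+1)^2) * 2 := by
          apply mul_le_mul _ (tsum_abs_sfun_le x) (tsum_nonneg (fun y => abs_nonneg _)) (by positivity)
          apply one_div_le_one_div_of_le (by positivity)
          apply pow_le_pow_right₀ _ hc
          have h0 : (0:ℝ) ≤ x := Nat.cast_nonneg x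
          linarith
      _ = 2 * (1/((x:ℝ)+1)^2) := by ring
lemma summable_g1 (c : ℕ) (hc : 2 ≤ c) : Summable (g1 c) := by
  apply summable_abs_iff.1
  have h := summable_abs_g1_swap c hc
  have := (Equiv.prodComm ℕ ℕ).summable_iff (f := fun p : ℕ×ℕ => |g1 c p|)
  exact this.1 h

lemma summable_g2 (c : ℕ) (hc : 2 ≤ c) : Summable (g2 c) := by
  apply Summable.congr _ (fun p => (g2_eq_neg c p).symm)
  apply Summable.neg
  exact ((Equiv.prodComm ℕ ℕ).summable_iff (f := g1 c)).2 (summable_g1 c hc)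

lemma tsum_g1 (c : ℕ) (hc : 2 ≤ c) :
    ∑' p, g1 c p = (3/4) * ∑' b:ℕ, 1/((b:ℝ)+1)^(c+2) := by
  have h1 : ∑' q : ℕ×ℕ, g1 c (q.2, q.1) = ∑' p, g1 c p := by
    have := (Equiv.prodComm ℕ ℕ).tsum_eq (f := g1 c)
    simpa [Prod.swap] using this
  rw [← h1]
  have hsumq : Summable (fun q : ℕ×ℕ => g1 c (q.2, q.1)) :=
    summable_abs_iff.1 (summable_abs_g1_swap c hc)
  rw [Summable.tsum_prod' hsumq (fun x => by
    apply Summable.congr ((summable_sfun x).mul_left (1/((x:ℝ)+1)^c))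
    intro y; rw [g1_eq])]
  have hin : ∀ x:ℕ, ∑' y, g1 c (y, x) = (3/4) * (1/((x:ℝ)+1)^(c+2)) := by
    intro x
    calc ∑' y, g1 c (y, x) = (1/((x:ℝ)+1)^c) * ∑' y, sfun x y := by
          rw [← tsum_mul_left]; exact tsum_congr (fun y => g1_eq c y x)
      _ = (1/((x:ℝ)+1)^c) * (3/(4*((x:ℝ)+1)^2)) := by rw [(hasSum_S x).tsum_eq]
      _ = (3/4) * (1/((x:ℝ)+1)^(c+2)) := by
          rw [pow_add]
          have : ((x:ℝ)+1) ≠ 0 := by positivity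
          field_simp
    
  calc ∑' x:ℕ, ∑' y, g1 c (y, x) = ∑' x:ℕ, (3/4) * (1/((x:ℝ)+1)^(c+2)) := tsum_congr hin
    _ = (3/4) * ∑' b:ℕ, 1/((b:ℝ)+1)^(c+2) := tsum_mul_left

lemma tsum_g2 (c : ℕ) (hc : 2 ≤ c) :
    ∑' p, g2 c p = -((3/4) * ∑' b:ℕ, 1/((b:ℝ)+1)^(c+2)) := by
  rw [← tsum_g1 c hc]
  calc ∑' p, g2 c p = ∑' p : ℕ×ℕ, - g1 c (p.2, p.1) := tsum_congr (g2_eq_neg c)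
    _ = - ∑' p : ℕ×ℕ, g1 c (p.2, p.1) := tsum_neg
    _ = - ∑' p, g1 c p := by
        congr 1
        have := (Equiv.prodComm ℕ ℕ).tsum_eq (f := g1 c)
        simpa [Prod.swap] using this

lemma geo_all (c : ℕ) (m n : ℝ) (hm : 0 < m) (hmn : m < n) :
    ∑ j ∈ Finset.Icc 2 (c+1), 1/(n^j * m^(c+2-j))
      = (1/m^c) * (1/((n-m)*n)) - 1/(n^(c+1)*(n-m)) := by
  have hn : 0 < n := lt_trans hm hmn
  have hm0 : m ≠ 0 := ne_of_gt hm
  have hn0 : n ≠ 0 := ne_of_gt hn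
  have hnm : n - m ≠ 0 := sub_ne_zero.2 (ne_of_gt hmn)
  have hmn0 : m - n ≠ 0 := sub_ne_zero.2 (ne_of_lt hmn)
  have ht1 : (m/n) ≠ 1 := by
    intro h
    rw [div_eq_one_iff_eq hn0] at h
    exact (ne_of_lt hmn) h
  have step1 : ∀ j ∈ Finset.Icc 2 (c+1), 1/(n^j * m^(c+2-j)) = (1/m^(c+2)) * (m/n)^j := by
    intro j hj
    rw [Finset.mem_Icc] at hj
    rw [div_pow, show c+2 = (c+2-j)+j by omega, pow_add]
    have h1 : m^(c+2-j) ≠ 0 := pow_ne_zero _ hm0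
    have h2 : m^j ≠ 0 := pow_ne_zero _ hm0
    have h3 : n^j ≠ 0 := pow_ne_zero _ hn0
    rw [Nat.add_sub_cancel]
    field_simp
  rw [Finset.sum_congr rfl step1, ← Finset.mul_sum]
  rw [show Finset.Icc 2 (c+1) = Finset.Ico 2 (c+2) by exact (Finset.Ico_add_one_right_eq_Icc _ _).symm]
  rw [geom_sum_Ico ht1 (by omega)]
  have e1 : (m/n)^(c+2) = (m^c*m^2)/(n^c*n^2) := by rw [div_pow, pow_add, pow_add]
  have e2 : (m/n)^2 = m^2/n^2 := by rw [div_pow]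
  rw [e1, e2, pow_add, show c+1 = c+1 from rfl, pow_succ]
  have hMc : m^c ≠ 0 := pow_ne_zero _ hm0
  have hNc : n^c ≠ 0 := pow_ne_zero _ hn0
  field_simp
  ring

lemma geo_even (J : ℕ) (m n : ℝ) (hm : 0 < m) (hmn : m < n) :
    ∑ j ∈ (Finset.Icc 2 (2*J+1)).filter (fun j => Even j), 1/(n^j * m^(2*J+2-j))
      = 1/(m^(2*J)*(n^2-m^2)) - 1/(n^(2*J)*(n^2-m^2)) := by
  have hn : 0 < n := lt_trans hm hmn
  have hm0 : m ≠ 0 := ne_of_gt hm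
  have hn0 : n ≠ 0 := ne_of_gt hn
  have hsq : m^2 < n^2 := by nlinarith
  have hsq0 : n^2 - m^2 ≠ 0 := sub_ne_zero.2 (ne_of_gt hsq)
  have hsq0' : m^2 - n^2 ≠ 0 := sub_ne_zero.2 (ne_of_lt hsq)
  have ht1 : ((m/n)^2) ≠ 1 := by
    rw [div_pow]
    intro h
    rw [div_eq_one_iff_eq (pow_ne_zero _ hn0)] at h
    exact (ne_of_lt hsq) h
  have himg : (Finset.Icc 2 (2*J+1)).filter (fun j => Even j)
      = (Finset.Icc 1 J).image (fun i => 2*i) := by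
    ext j
    simp only [Finset.mem_filter, Finset.mem_Icc, Finset.mem_image]
    constructor
    · rintro ⟨⟨h2, h3⟩, he⟩
      obtain ⟨i, rfl⟩ := he
      exact ⟨i, ⟨by omega, by omega⟩, by omega⟩
    · rintro ⟨i, ⟨h1, h2⟩, rfl⟩
      exact ⟨⟨by omega, by omega⟩, ⟨i, by omega⟩⟩
  rw [himg, Finset.sum_image (by intro a _ b _ h; simp only at h; omega)]
  have step1 : ∀ i ∈ Finset.Icc 1 J, 1/(n^(2*i) * m^(2*J+2-2*i))
      = (1/m^(2*J+2)) * ((m/n)^2)^i := by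
    intro i hi
    rw [Finset.mem_Icc] at hi
    rw [← pow_mul, div_pow, show 2*J+2 = (2*J+2-2*i)+2*i by omega, pow_add]
    have h1 : m^(2*J+2-2*i) ≠ 0 := pow_ne_zero _ hm0
    have h2 : m^(2*i) ≠ 0 := pow_ne_zero _ hm0
    have h3 : n^(2*i) ≠ 0 := pow_ne_zero _ hn0
    rw [Nat.add_sub_cancel]
    field_simp
  rw [Finset.sum_congr rfl step1, ← Finset.mul_sum]
  rw [show Finset.Icc 1 J = Finset.Ico 1 (J+1) by exact (Finset.Ico_add_one_right_eq_Icc _ _).symm]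
  rw [geom_sum_Ico ht1 (by omega)]
  have e1 : ((m/n)^2)^(J+1) = (m^(2*J)*m^2)/(n^(2*J)*n^2) := by
    rw [← pow_mul, div_pow, show 2*(J+1) = 2*J+2 by omega, pow_add, pow_add]
  have e2 : ((m/n)^2)^1 = m^2/n^2 := by rw [pow_one, div_pow]
  rw [e1, e2, show 2*J+2 = 2*J+2 from rfl, pow_add]
  set M := m^(2*J) with hM
  set N := n^(2*J) with hN
  have hM0 : M ≠ 0 := pow_ne_zero _ hm0
  have hN0 : N ≠ 0 := pow_ne_zero _ hn0
  field_simp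
  ring

lemma summable_rzterm (p : ℕ) (hp : 2 ≤ p) : Summable (fun b:ℕ => 1/((b:ℝ)+1)^p) := by
  apply Summable.of_nonneg_of_le (fun b => by positivity) _ summable_inv_sq
  intro b
  apply one_div_le_one_div_of_le (by positivity)
  apply pow_le_pow_right₀ _ hp
  have : (0:ℝ) ≤ b := Nat.cast_nonneg b
  linarith

lemma summable_sq_prod :
    Summable (fun x : ℕ×ℕ => (1/((x.1:ℝ)+1)^2) * (1/((x.2:ℝ)+1)^2)) := by
  have h := Summable.mul_of_nonneg (f := fun a:ℕ => 1/((a:ℝ)+1)^2)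
    (g := fun a:ℕ => 1/((a:ℝ)+1)^2) summable_inv_sq summable_inv_sq
    (fun a => by positivity) (fun a => by positivity)
  exact h

lemma aux_dz (q p : ℕ) (hq : 2 ≤ q) (hp : 1 ≤ p) (h4 : 4 ≤ q+p) (A B : ℝ)
    (hA1 : 1 ≤ A) (hB1 : 1 ≤ B) :
    1/((A+B)^q * B^p) ≤ (1/A^2) * (1/B^2) := by
  rw [one_div_mul_one_div]
  apply one_div_le_one_div_of_le (by positivity)
  have hAn : A ≤ A+B := by linarith
  have hBn : B ≤ A+B := by linarith
  have hn1 : (1:ℝ) ≤ A+B := by linarith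
  rcases le_or_gt 2 p with h2p | h2p
  · have t1 : A^2 ≤ (A+B)^q :=
      le_trans (pow_le_pow_left₀ (by linarith) hAn 2) (pow_le_pow_right₀ hn1 hq)
    have t2 : B^2 ≤ B^p := pow_le_pow_right₀ hB1 h2p
    exact mul_le_mul t1 t2 (by positivity) (by positivity)
  · have hp1 : p = 1 := by omega
    subst hp1
    have hq3 : 3 ≤ q := by omega
    have t4 : (A+B)^3 ≤ (A+B)^q := pow_le_pow_right₀ hn1 hq3
    have s1 : A*A ≤ (A+B)*(A+B) :=
      mul_le_mul hAn hAn (by linarith) (by linarith)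
    have t2 : A*A*B ≤ (A+B)*(A+B)*(A+B) :=
      mul_le_mul s1 hBn (by linarith) (by positivity)
    calc A^2*B^2 = (A*A*B)*B := by ring
      _ ≤ (A+B)^q * B^1 := by
          rw [pow_one]
          have h3 : (A+B)*(A+B)*(A+B) = (A+B)^3 := by ring
          have : A*A*B ≤ (A+B)^q := by rw [← h3] at t4; linarith
          apply mul_le_mul this (le_refl B) (by linarith) (by positivity)

lemma summable_dzterm (q p : ℕ) (hq : 2 ≤ q) (hp : 1 ≤ p) (h4 : 4 ≤ q+p) :
    Summable (fun x : ℕ×ℕ => 1/(((x.1:ℝ)+(x.2:ℝ)+2)^q * ((x.2:ℝ)+1)^p)) := by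
  apply Summable.of_nonneg_of_le (fun x => by positivity) _ summable_sq_prod
  intro x
  have hA1 : (1:ℝ) ≤ (x.1:ℝ)+1 := by have := Nat.cast_nonneg (α := ℝ) x.1; linarith
  have hB1 : (1:ℝ) ≤ (x.2:ℝ)+1 := by have := Nat.cast_nonneg (α := ℝ) x.2; linarith
  have h := aux_dz q p hq hp h4 ((x.1:ℝ)+1) ((x.2:ℝ)+1) hA1 hB1
  rw [show ((x.1:ℝ)+1)+((x.2:ℝ)+1) = (x.1:ℝ)+(x.2:ℝ)+2 by ring] at h
  exact h

lemma aux_e1 (c : ℕ) (hc : 2 ≤ c) (A B : ℝ) (hA1 : 1 ≤ A) (hB1 : 1 ≤ B) :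
    (1/B^c) * (1/(A*(A+B))) ≤ (1/A^2) * (1/B^2) := by
  rw [one_div_mul_one_div, one_div_mul_one_div]
  apply one_div_le_one_div_of_le (by positivity)
  have t1 : B^2 ≤ B^c := pow_le_pow_right₀ hB1 hc
  have t2 : A*A ≤ A*(A+B) := by nlinarith
  calc A^2*B^2 = (A*A)*B^2 := by ring
    _ ≤ (A*(A+B))*B^c := mul_le_mul t2 t1 (by positivity) (by positivity)
    _ = B^c*(A*(A+B)) := by ring

lemma summable_e1 (c : ℕ) (hc : 2 ≤ c) :
    Summable (fun x : ℕ×ℕ => (1/((x.2:ℝ)+1)^c) * (1/(((x.1:ℝ)+1)*((x.1:ℝ)+(x.2:ℝ)+2)))) := by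
  apply Summable.of_nonneg_of_le (fun x => by positivity) _ summable_sq_prod
  intro x
  have hA1 : (1:ℝ) ≤ (x.1:ℝ)+1 := by have := Nat.cast_nonneg (α := ℝ) x.1; linarith
  have hB1 : (1:ℝ) ≤ (x.2:ℝ)+1 := by have := Nat.cast_nonneg (α := ℝ) x.2; linarith
  have h := aux_e1 c hc ((x.1:ℝ)+1) ((x.2:ℝ)+1) hA1 hB1
  rw [show ((x.1:ℝ)+1)+((x.2:ℝ)+1) = (x.1:ℝ)+(x.2:ℝ)+2 by ring] at h
  exact h

lemma aux_e2 (c : ℕ) (hc : 2 ≤ c) (A B : ℝ) (hA1 : 1 ≤ A) (hB1 : 1 ≤ B) :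
    1/((A+B)^(c+1) * A) ≤ (1/A^2) * (1/B^2) := by
  rw [one_div_mul_one_div]
  apply one_div_le_one_div_of_le (by positivity)
  have t4 : (A+B)^3 ≤ (A+B)^(c+1) := pow_le_pow_right₀ (by linarith) (by omega)
  have hAn : A ≤ A+B := by linarith
  have hBn : B ≤ A+B := by linarith
  have s1 : A*B ≤ (A+B)*(A+B) :=
    mul_le_mul hAn hBn (by linarith) (by linarith)
  have t2 : (A*B*B) ≤ ((A+B)*(A+B)*(A+B)) :=
    mul_le_mul s1 hBn (by linarith) (by positivity)
  calc A^2*B^2 = (A*B*B)*A := by ring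
    _ ≤ ((A+B)*(A+B)*(A+B))*A := mul_le_mul t2 (le_refl A) (by linarith) (by positivity)
    _ = (A+B)^3*A := by ring
    _ ≤ (A+B)^(c+1)*A := mul_le_mul t4 (le_refl A) (by positivity)
        (by positivity)

lemma summable_e2 (c : ℕ) (hc : 2 ≤ c) :
    Summable (fun x : ℕ×ℕ => 1/(((x.1:ℝ)+(x.2:ℝ)+2)^(c+1) * ((x.1:ℝ)+1))) := by
  apply Summable.of_nonneg_of_le (fun x => by positivity) _ summable_sq_prod
  intro x
  have hA1 : (1:ℝ) ≤ (x.1:ℝ)+1 := by have := Nat.cast_nonneg (α := ℝ) x.1; linarith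
  have hB1 : (1:ℝ) ≤ (x.2:ℝ)+1 := by have := Nat.cast_nonneg (α := ℝ) x.2; linarith
  have h := aux_e2 c hc ((x.1:ℝ)+1) ((x.2:ℝ)+1) hA1 hB1
  rw [show ((x.1:ℝ)+1)+((x.2:ℝ)+1) = (x.1:ℝ)+(x.2:ℝ)+2 by ring] at h
  exact h

/-- value of the first Euler piece -/
lemma tsum_e1 (c : ℕ) (hc : 2 ≤ c) :
    ∑' x : ℕ×ℕ, (1/((x.2:ℝ)+1)^c) * (1/(((x.1:ℝ)+1)*((x.1:ℝ)+(x.2:ℝ)+2)))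
      = ∑' u : ℕ, harm (u+1) * (1/((u:ℝ)+1)^(c+1)) := by
  set E1 : ℕ×ℕ → ℝ := fun x => (1/((x.2:ℝ)+1)^c) * (1/(((x.1:ℝ)+1)*((x.1:ℝ)+(x.2:ℝ)+2))) with hE1
  have hswap : ∑' q : ℕ×ℕ, E1 (q.2, q.1) = ∑' x, E1 x := by
    have := (Equiv.prodComm ℕ ℕ).tsum_eq (f := E1)
    simpa [Prod.swap] using this
  rw [← hswap]
  have hsumF : Summable (fun q : ℕ×ℕ => E1 (q.2, q.1)) := by
    have h := summable_e1 c hc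
    rw [hE1]
    exact ((Equiv.prodComm ℕ ℕ).summable_iff (f := E1)).2 h
  rw [Summable.tsum_prod' hsumF (fun u => by
    apply Summable.congr ((hasSum_T1 u).summable.mul_left (1/((u:ℝ)+1)^c))
    intro v
    simp only [hE1])]
  apply tsum_congr
  intro u
  have hin : ∑' v : ℕ, E1 (v, u) = (1/((u:ℝ)+1)^c) * (harm (u+1)/((u:ℝ)+1)) := by
    rw [← (hasSum_T1 u).tsum_eq, ← tsum_mul_left]
  rw [hin, pow_succ]
  have h0 : ((u:ℝ)+1) ≠ 0 := by positivity
  field_simp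
  try ring
/-- value of the second Euler piece -/
lemma tsum_e2 (c : ℕ) (hc : 2 ≤ c) :
    ∑' x : ℕ×ℕ, 1/(((x.1:ℝ)+(x.2:ℝ)+2)^(c+1) * ((x.1:ℝ)+1))
      = ∑' u : ℕ, harm (u+1) * (1/((u:ℝ)+2)^(c+1)) := by
  set P : ℕ×ℕ → ℝ := fun q => if q.1 ≤ q.2 then 1/(((q.2:ℝ)+2)^(c+1) * ((q.1:ℝ)+1)) else 0 with hP
  set ι : ℕ×ℕ → ℕ×ℕ := fun x => (x.1, x.1+x.2) with hι
  have hinj : Function.Injective ι := by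
    intro x y h
    rw [hι] at h
    simp only [Prod.mk.injEq] at h
    obtain ⟨h1, h2⟩ := h
    exact Prod.ext h1 (by omega)
  have hsupp : Function.support P ⊆ Set.range ι := by
    intro p hp
    rw [Function.mem_support] at hp
    by_cases h : p.1 ≤ p.2
    · exact ⟨(p.1, p.2 - p.1), by rw [hι]; exact Prod.ext rfl (by simp; omega)⟩
    · exfalso; apply hp; rw [hP]; simp only [if_neg h]
  have hcomp : ∀ x : ℕ×ℕ, P (ι x) = 1/(((x.1:ℝ)+(x.2:ℝ)+2)^(c+1) * ((x.1:ℝ)+1)) := by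
    intro x
    rw [hP, hι]
    simp only [le_add_iff_nonneg_right, Nat.zero_le, if_true, if_pos]
    push_cast
    ring_nf
  rw [← tsum_congr hcomp, hinj.tsum_eq hsupp]
  -- now Fubini with outer coordinate = q.2
  have hswap : ∑' q : ℕ×ℕ, P (q.2, q.1) = ∑' p, P p := by
    have := (Equiv.prodComm ℕ ℕ).tsum_eq (f := P)
    simpa [Prod.swap] using this
  rw [← hswap]
  have hsumP : Summable P := by
    have hs := summable_e2 c hc
    have : Summable (P ∘ ι) := by
      apply Summable.congr hs
      intro x
      exact (hcomp x).symm
    exact (hinj.summable_iff (by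
      intro p hp
      by_contra hne
      apply hp
      exact hsupp (Function.mem_support.2 hne))).1 this
  have hsumF2 : Summable (fun q : ℕ×ℕ => P (q.2, q.1)) :=
    ((Equiv.prodComm ℕ ℕ).summable_iff (f := P)).2 hsumP
  rw [Summable.tsum_prod' hsumF2 (fun u => by
    apply summable_of_ne_finset_zero (s := Finset.range (u+1))
    intro v hv
    rw [Finset.mem_range] at hv
    rw [hP]
    simp only
    rw [if_neg (by omega)])]
  apply tsum_congr
  intro u
  rw [tsum_eq_sum (s := Finset.range (u+1)) (by
    intro v hv
    rw [Finset.mem_range] at hv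
    rw [hP]
    simp only
    rw [if_neg (by omega)])]
  have e1 : ∀ v ∈ Finset.range (u+1),
      P (v, u) = (1/((v:ℝ)+1)) * (1/((u:ℝ)+2)^(c+1)) := by
    intro v hv
    rw [Finset.mem_range] at hv
    rw [hP]
    simp only
    rw [if_pos (by omega)]
    rw [one_div_mul_one_div]
    ring_nf
  rw [Finset.sum_congr rfl e1, ← Finset.sum_mul]
  rw [show harm (u+1) = ∑ i ∈ Finset.range (u+1), 1/((i:ℝ)+1) from rfl]

/-- Euler's sum theorem for the double zeta values -/
lemma euler_total (c : ℕ) (hc : 2 ≤ c) :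
    ∑ j ∈ Finset.Icc 2 (c+1), dz j (c+2-j) = ∑' b:ℕ, 1/((b:ℝ)+1)^(c+2) := by
  -- step 1: exchange finite sum and tsum
  have hterm : ∀ j ∈ Finset.Icc 2 (c+1),
      Summable (fun x : ℕ×ℕ => 1/(((x.1:ℝ)+(x.2:ℝ)+2)^j * ((x.2:ℝ)+1)^(c+2-j))) := by
    intro j hj
    rw [Finset.mem_Icc] at hj
    exact summable_dzterm j (c+2-j) (by omega) (by omega) (by omega)
  have hstep1 : ∑ j ∈ Finset.Icc 2 (c+1), dz j (c+2-j)
      = ∑' x : ℕ×ℕ, ∑ j ∈ Finset.Icc 2 (c+1),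
          1/(((x.1:ℝ)+(x.2:ℝ)+2)^j * ((x.2:ℝ)+1)^(c+2-j)) := by
    rw [Summable.tsum_finsetSum hterm]
    apply Finset.sum_congr rfl
    intro j _
    rfl
  rw [hstep1]
  -- step 2: pointwise geometric evaluation
  have hstep2 : ∀ x : ℕ×ℕ, ∑ j ∈ Finset.Icc 2 (c+1),
      1/(((x.1:ℝ)+(x.2:ℝ)+2)^j * ((x.2:ℝ)+1)^(c+2-j))
      = (1/((x.2:ℝ)+1)^c) * (1/(((x.1:ℝ)+1)*((x.1:ℝ)+(x.2:ℝ)+2)))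
        - 1/(((x.1:ℝ)+(x.2:ℝ)+2)^(c+1) * ((x.1:ℝ)+1)) := by
    intro x
    have hm : (0:ℝ) < (x.2:ℝ)+1 := by positivity
    have hmn : (x.2:ℝ)+1 < (x.1:ℝ)+(x.2:ℝ)+2 := by
      have := Nat.cast_nonneg (α := ℝ) x.1
      linarith
    have h := geo_all c ((x.2:ℝ)+1) ((x.1:ℝ)+(x.2:ℝ)+2) hm hmn
    rw [h]
    rw [show (x.1:ℝ)+(x.2:ℝ)+2 - ((x.2:ℝ)+1) = (x.1:ℝ)+1 by ring]
  rw [tsum_congr hstep2]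
  rw [Summable.tsum_sub (summable_e1 c hc) (summable_e2 c hc)]
  rw [tsum_e1 c hc, tsum_e2 c hc]
  -- step 3: telescoping the harmonic sums
  have hA : Summable (fun u : ℕ => harm (u+1) * (1/((u:ℝ)+1)^(c+1))) := by
    apply Summable.of_nonneg_of_le
      (fun u => by have := harm_nonneg (u+1); positivity) _ summable_inv_sq
    intro u
    have h1 : harm (u+1) ≤ (u:ℝ)+1 := by
      have := harm_le (u+1); push_cast at this; linarith
    have h2 : ((u:ℝ)+1)^2 ≤ ((u:ℝ)+1)^c := by
      apply pow_le_pow_right₀ _ hc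
      have := Nat.cast_nonneg (α := ℝ) u; linarith
    calc harm (u+1) * (1/((u:ℝ)+1)^(c+1)) ≤ ((u:ℝ)+1) * (1/((u:ℝ)+1)^(c+1)) := by
          apply mul_le_mul_of_nonneg_right h1 (by positivity)
      _ = 1/((u:ℝ)+1)^c := by
          rw [pow_succ]
          field_simp
      _ ≤ 1/((u:ℝ)+1)^2 := by
          apply one_div_le_one_div_of_le (by positivity) h2
  have hB : Summable (fun u : ℕ => harm (u+1) * (1/((u:ℝ)+2)^(c+1))) := by
    apply Summable.of_nonneg_of_le
      (fun u => by have := harm_nonneg (u+1); positivity) _ summable_inv_sq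
    intro u
    have h1 : harm (u+1) ≤ (u:ℝ)+1 := by
      have := harm_le (u+1); push_cast at this; linarith
    have hu0 : (0:ℝ) ≤ u := Nat.cast_nonneg u
    have h2 : ((u:ℝ)+1)^2 * (((u:ℝ)+1)) ≤ ((u:ℝ)+2)^(c+1) := by
      calc ((u:ℝ)+1)^2 * ((u:ℝ)+1) = ((u:ℝ)+1)^3 := by ring
        _ ≤ ((u:ℝ)+2)^3 := by
            apply pow_le_pow_left₀ (by linarith) (by linarith)
        _ ≤ ((u:ℝ)+2)^(c+1) := by
            apply pow_le_pow_right₀ (by linarith) (by omega)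
    calc harm (u+1) * (1/((u:ℝ)+2)^(c+1)) ≤ ((u:ℝ)+1) * (1/((u:ℝ)+2)^(c+1)) := by
          apply mul_le_mul_of_nonneg_right h1 (by positivity)
      _ ≤ 1/((u:ℝ)+1)^2 := by
          rw [mul_one_div, div_le_div_iff₀ (by positivity) (by positivity)]
          nlinarith
  have hA' : Summable (fun u : ℕ => harm (u+1+1) * (1/(((u:ℕ)+1:ℝ)+1)^(c+1))) := by
    have := (summable_nat_add_iff
      (f := fun u : ℕ => harm (u+1) * (1/((u:ℝ)+1)^(c+1))) 1).2 hA
    apply this.congr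
    intro u
    push_cast
    norm_num
  rw [Summable.tsum_eq_zero_add hA]
  have h0 : harm (0+1) * (1/(((0:ℕ):ℝ)+1)^(c+1)) = 1 := by
    norm_num [harm]
  rw [h0]
  have hshift : ∀ u : ℕ, harm (u+1+1) * (1/(((u+1:ℕ):ℝ)+1)^(c+1))
      - harm (u+1) * (1/((u:ℝ)+2)^(c+1)) = 1/((u:ℝ)+2)^(c+2) := by
    intro u
    have hc2 : ((u+1:ℕ):ℝ)+1 = (u:ℝ)+2 := by push_cast; ring
    rw [hc2, harm_succ (u+1)]
    have hc3 : ((u+1:ℕ):ℝ)+1 = (u:ℝ)+2 := by push_cast; ring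
    rw [hc3]
    have h0 : ((u:ℝ)+2) ≠ 0 := by positivity
    rw [pow_succ _ (c+1)]
    field_simp
    ring
  have hsub : ∑' u : ℕ, harm (u+1+1) * (1/(((u+1:ℕ):ℝ)+1)^(c+1))
      - ∑' u : ℕ, harm (u+1) * (1/((u:ℝ)+2)^(c+1))
      = ∑' u : ℕ, 1/((u:ℝ)+2)^(c+2) := by
    rw [← Summable.tsum_sub (by exact_mod_cast hA') hB]
    exact tsum_congr hshift
  have hrz : ∑' b:ℕ, 1/((b:ℝ)+1)^(c+2)
      = 1 + ∑' b:ℕ, 1/(((b+1:ℕ):ℝ)+1)^(c+2) := by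
    rw [Summable.tsum_eq_zero_add (summable_rzterm (c+2) (by omega))]
    norm_num
  have hc4 : ∀ b:ℕ, 1/(((b+1:ℕ):ℝ)+1)^(c+2) = 1/((b:ℝ)+2)^(c+2) := by
    intro b; push_cast; ring_nf
  rw [tsum_congr hc4] at hrz
  have hAeq : ∑' u : ℕ, harm (u+1+1) * (1/(((u+1:ℕ):ℝ)+1)^(c+1))
      = ∑' u : ℕ, harm ((u:ℕ)+1+1) * (1/(((u:ℕ)+1:ℝ)+1)^(c+1)) := by
    apply tsum_congr; intro u; push_cast; ring_nf
  rw [hrz]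
  rw [hAeq] at hsub
  linarith [hsub]

lemma even_total (J : ℕ) (hJ : 1 ≤ J) :
    ∑ j ∈ (Finset.Icc 2 (2*J+1)).filter (fun j => Even j), dz j (2*J+2-j)
      = (3/4) * ∑' b:ℕ, 1/((b:ℝ)+1)^(2*J+2) := by
  have hc : 2 ≤ 2*J := by omega
  set D : ℕ×ℕ → ℝ := fun p => g1 (2*J) p - g2 (2*J) p with hD
  set F1 : ℕ×ℕ → ℝ := fun p => if p.2 < p.1 then D p else 0 with hF1
  set F2 : ℕ×ℕ → ℝ := fun p => if p.1 < p.2 then D p else 0 with hF2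
  have hsumD : Summable D := (summable_g1 (2*J) hc).sub (summable_g2 (2*J) hc)
  have habs : Summable (fun p : ℕ×ℕ => |g1 (2*J) p| + |g2 (2*J) p|) :=
    (summable_abs_iff.2 (summable_g1 (2*J) hc)).add (summable_abs_iff.2 (summable_g2 (2*J) hc))
  have hsumF1 : Summable F1 := by
    apply Summable.of_norm_bounded habs
    intro p
    rw [hF1]
    dsimp only
    split_ifs
    · rw [Real.norm_eq_abs, hD]
      exact abs_sub _ _
    · simp
      positivity
  have hsumF2 : Summable F2 := by
    apply Summable.of_norm_bounded habs
    intro p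
    rw [hF2]
    dsimp only
    split_ifs
    · rw [Real.norm_eq_abs, hD]
      exact abs_sub _ _
    · simp
      positivity
  -- the per-pair value of the even partial sums
  have hterm : ∀ j ∈ (Finset.Icc 2 (2*J+1)).filter (fun j => Even j),
      Summable (fun x : ℕ×ℕ => 1/(((x.1:ℝ)+(x.2:ℝ)+2)^j * ((x.2:ℝ)+1)^(2*J+2-j))) := by
    intro j hj
    rw [Finset.mem_filter, Finset.mem_Icc] at hj
    exact summable_dzterm j (2*J+2-j) (by omega) (by omega) (by omega)
  have hstep1 : ∑ j ∈ (Finset.Icc 2 (2*J+1)).filter (fun j => Even j), dz j (2*J+2-j)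
      = ∑' x : ℕ×ℕ, ∑ j ∈ (Finset.Icc 2 (2*J+1)).filter (fun j => Even j),
          1/(((x.1:ℝ)+(x.2:ℝ)+2)^j * ((x.2:ℝ)+1)^(2*J+2-j)) := by
    rw [Summable.tsum_finsetSum hterm]
    apply Finset.sum_congr rfl
    intro j _
    rfl
  -- pointwise identification with g1 - g2 at shifted index
  have hpt : ∀ x : ℕ×ℕ, ∑ j ∈ (Finset.Icc 2 (2*J+1)).filter (fun j => Even j),
      1/(((x.1:ℝ)+(x.2:ℝ)+2)^j * ((x.2:ℝ)+1)^(2*J+2-j))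
      = 1/((((x.2:ℝ)+1))^(2*J)*((((x.1:ℝ)+(x.2:ℝ)+2))^2-((x.2:ℝ)+1)^2))
        - 1/((((x.1:ℝ)+(x.2:ℝ)+2))^(2*J)*((((x.1:ℝ)+(x.2:ℝ)+2))^2-((x.2:ℝ)+1)^2)) := by
    intro x
    have hm : (0:ℝ) < (x.2:ℝ)+1 := by positivity
    have hmn : (x.2:ℝ)+1 < (x.1:ℝ)+(x.2:ℝ)+2 := by
      have := Nat.cast_nonneg (α := ℝ) x.1
      linarith
    exact geo_even J ((x.2:ℝ)+1) ((x.1:ℝ)+(x.2:ℝ)+2) hm hmn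
  -- identification with D ∘ ι₁ and D ∘ ι₂
  have hι1 : ∀ x : ℕ×ℕ, D (x.1+x.2+1, x.2)
      = 1/((((x.2:ℝ)+1))^(2*J)*((((x.1:ℝ)+(x.2:ℝ)+2))^2-((x.2:ℝ)+1)^2))
        - 1/((((x.1:ℝ)+(x.2:ℝ)+2))^(2*J)*((((x.1:ℝ)+(x.2:ℝ)+2))^2-((x.2:ℝ)+1)^2)) := by
    intro x
    have hne : ¬ (x.1+x.2+1 = x.2) := by omega
    rw [hD]
    simp only [g1, g2, hne, if_false]
    have hcast : ((x.1+x.2+1 : ℕ):ℝ) + 1 = (x.1:ℝ)+(x.2:ℝ)+2 := by push_cast; ring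
    rw [hcast]
  have hι2 : ∀ x : ℕ×ℕ, D (x.2, x.1+x.2+1)
      = 1/((((x.2:ℝ)+1))^(2*J)*((((x.1:ℝ)+(x.2:ℝ)+2))^2-((x.2:ℝ)+1)^2))
        - 1/((((x.1:ℝ)+(x.2:ℝ)+2))^(2*J)*((((x.1:ℝ)+(x.2:ℝ)+2))^2-((x.2:ℝ)+1)^2)) := by
    intro x
    have hne : ¬ (x.2 = x.1+x.2+1) := by omega
    rw [hD]
    simp only [g1, g2, hne, if_false]
    have hcast : ((x.1+x.2+1 : ℕ):ℝ) + 1 = (x.1:ℝ)+(x.2:ℝ)+2 := by push_cast; ring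
    rw [hcast]
    have e1 : ((x.2:ℝ)+1)^2 - ((x.1:ℝ)+(x.2:ℝ)+2)^2
        = -((((x.1:ℝ)+(x.2:ℝ)+2))^2 - ((x.2:ℝ)+1)^2) := by ring
    rw [e1, mul_neg, mul_neg, div_neg, div_neg]
    ring
  -- tsum over F1 equals the even sum
  have hSF1 : ∑ j ∈ (Finset.Icc 2 (2*J+1)).filter (fun j => Even j), dz j (2*J+2-j)
      = ∑' p, F1 p := by
    set ι : ℕ×ℕ → ℕ×ℕ := fun x => (x.1+x.2+1, x.2) with hι
    have hinj : Function.Injective ι := by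
      intro x y h
      rw [hι] at h
      simp only [Prod.mk.injEq] at h
      exact Prod.ext (by omega) h.2
    have hsupp : Function.support F1 ⊆ Set.range ι := by
      intro p hp
      rw [Function.mem_support] at hp
      by_cases h : p.2 < p.1
      · exact ⟨(p.1 - p.2 - 1, p.2), by rw [hι]; exact Prod.ext (by simp; omega) rfl⟩
      · exfalso; apply hp; rw [hF1]; simp only [if_neg h]
    have hcomp : ∀ x : ℕ×ℕ, F1 (ι x)
        = ∑ j ∈ (Finset.Icc 2 (2*J+1)).filter (fun j => Even j),
            1/(((x.1:ℝ)+(x.2:ℝ)+2)^j * ((x.2:ℝ)+1)^(2*J+2-j)) := by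
      intro x
      rw [hF1, hι]
      simp only
      rw [if_pos (by omega)]
      rw [hpt x]
      exact hι1 x
    rw [hstep1, ← hinj.tsum_eq hsupp]
    exact (tsum_congr hcomp).symm
  -- tsum over F2 also equals the even sum
  have hSF2 : ∑ j ∈ (Finset.Icc 2 (2*J+1)).filter (fun j => Even j), dz j (2*J+2-j)
      = ∑' p, F2 p := by
    set ι : ℕ×ℕ → ℕ×ℕ := fun x => (x.2, x.1+x.2+1) with hι
    have hinj : Function.Injective ι := by
      intro x y h
      rw [hι] at h
      simp only [Prod.mk.injEq] at h
      exact Prod.ext (by omega) h.1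
    have hsupp : Function.support F2 ⊆ Set.range ι := by
      intro p hp
      rw [Function.mem_support] at hp
      by_cases h : p.1 < p.2
      · exact ⟨(p.2 - p.1 - 1, p.1), by rw [hι]; exact Prod.ext rfl (by simp; omega)⟩
      · exfalso; apply hp; rw [hF2]; simp only [if_neg h]
    have hcomp : ∀ x : ℕ×ℕ, F2 (ι x)
        = ∑ j ∈ (Finset.Icc 2 (2*J+1)).filter (fun j => Even j),
            1/(((x.1:ℝ)+(x.2:ℝ)+2)^j * ((x.2:ℝ)+1)^(2*J+2-j)) := by
      intro x
      rw [hF2, hι]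
      simp only
      rw [if_pos (by omega)]
      rw [hpt x]
      exact hι2 x
    rw [hstep1, ← hinj.tsum_eq hsupp]
    exact (tsum_congr hcomp).symm
  -- combine
  have hdiag : ∀ p : ℕ×ℕ, F1 p + F2 p = D p := by
    intro p
    rw [hF1, hF2]
    simp only
    rcases lt_trichotomy p.1 p.2 with h | h | h
    · rw [if_neg (by omega), if_pos h, zero_add]
    · rw [if_neg (by omega), if_neg (by omega)]
      rw [hD]
      simp only [g1, g2, if_pos h]
      norm_num
    · rw [if_pos h, if_neg (by omega), add_zero]
  have hcomb : ∑ j ∈ (Finset.Icc 2 (2*J+1)).filter (fun j => Even j), dz j (2*J+2-j)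
      + ∑ j ∈ (Finset.Icc 2 (2*J+1)).filter (fun j => Even j), dz j (2*J+2-j)
      = (3/2) * ∑' b:ℕ, 1/((b:ℝ)+1)^(2*J+2) := by
    calc ∑ j ∈ (Finset.Icc 2 (2*J+1)).filter (fun j => Even j), dz j (2*J+2-j)
        + ∑ j ∈ (Finset.Icc 2 (2*J+1)).filter (fun j => Even j), dz j (2*J+2-j)
        = ∑' p, F1 p + ∑' p, F2 p := by rw [← hSF1, ← hSF2]
      _ = ∑' p, (F1 p + F2 p) := (Summable.tsum_add hsumF1 hsumF2).symm
      _ = ∑' p, D p := tsum_congr hdiag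
      _ = ∑' p, g1 (2*J) p - ∑' p, g2 (2*J) p := Summable.tsum_sub (summable_g1 (2*J) hc) (summable_g2 (2*J) hc)
      _ = (3/2) * ∑' b:ℕ, 1/((b:ℝ)+1)^(2*J+2) := by
          rw [tsum_g1 (2*J) hc, tsum_g2 (2*J) hc]
          rw [show 2*J + 2 = 2*J+2 by omega]
          ring
  linarith [hcomb]

theorem gkz_sum_formula (k : ℕ) (hk : Even k) (hk4 : 4 ≤ k) :
    ∑ j ∈ (Finset.Icc 3 (k - 1)).filter (fun j => Odd j), dz j (k - j)
      = (1 / 4) * rz k := by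
  obtain ⟨r, hr⟩ := hk
  have hex : ∃ J : ℕ, 1 ≤ J ∧ k = 2*J+2 := ⟨r-1, by omega, by omega⟩
  obtain ⟨J, hJ, rfl⟩ := hex
  have h1 : 2*J+2-1 = 2*J+1 := by omega
  rw [h1]
  have hsplit := Finset.sum_filter_add_sum_filter_not (Finset.Icc 2 (2*J+1))
    (fun j => Even j) (fun j => dz j (2*J+2-j))
  have heq : (Finset.Icc 2 (2*J+1)).filter (fun j => ¬ Even j)
      = (Finset.Icc 3 (2*J+1)).filter (fun j => Odd j) := by
    ext j
    simp only [Finset.mem_filter, Finset.mem_Icc, Nat.even_iff, Nat.odd_iff]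
    omega
  rw [heq] at hsplit
  have hE := even_total J hJ
  have hT := euler_total (2*J) (by omega)
  have hT' : ∑ j ∈ Finset.Icc 2 (2*J+1), dz j (2*J+2-j)
      = ∑' b:ℕ, 1/((b:ℝ)+1)^(2*J+2) := by
    rw [← hT]
  have hrz : rz (2*J+2) = ∑' b:ℕ, 1/((b:ℝ)+1)^(2*J+2) := rfl
  rw [hrz]
  linarith [hsplit, hE, hT']
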